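/- For every t ∈ [0,1], ∫₀¹ ∫₀¹ (min(s1,t) − s1 t)(min(s2,t) − s2 t) · [ max(min(s1,s2) − t, 0) + s1 s2 (1−t) − s1·max(s2 − t, 0) − s2·max(s1 − t, 0) ] ds1 ds2 = t²(1−t)²(1 − 3t + 8t² − 6t³)/45. -/

import Mathlib

open intervalIntegral Set

private lemma poly_int (c0 c1 c2 c3 c4 lo hi : ℝ) :
    ∫ x in lo..hi, (c0 + c1*x + c2*x^2 + c3*x^3 + c4*x^4)
    = (c0*hi + c1*hi^2/2 + c2*hi^3/3 + c3*hi^4/4 + c4*hi^5/5)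
      - (c0*lo + c1*lo^2/2 + c2*lo^3/3 + c3*lo^4/4 + c4*lo^5/5) := by
  have h : ∀ x ∈ Set.uIcc lo hi, HasDerivAt
      (fun x => c0*x + c1*x^2/2 + c2*x^3/3 + c3*x^4/4 + c4*x^5/5)
      (c0 + c1*x + c2*x^2 + c3*x^3 + c4*x^4) x := by
    intro x _
    have h1 := (((((hasDerivAt_id x).const_mul c0).add
      (((hasDerivAt_pow 2 x).const_mul c1).div_const 2)).add
      (((hasDerivAt_pow 3 x).const_mul c2).div_const 3)).add
      (((hasDerivAt_pow 4 x).const_mul c3).div_const 4)).add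
      (((hasDerivAt_pow 5 x).const_mul c4).div_const 5)
    refine h1.congr_deriv ?_
    push_cast
    ring
  rw [intervalIntegral.integral_eq_sub_of_hasDerivAt h
    ((by fun_prop : Continuous fun x:ℝ => c0 + c1*x + c2*x^2 + c3*x^3 + c4*x^4).intervalIntegrable lo hi)]

private lemma inner_lo (t s1 : ℝ) (ht0 : 0 ≤ t) (ht1 : t ≤ 1) (h0 : 0 ≤ s1) (h1 : s1 ≤ t) :
    (∫ s2 in (0:ℝ)..1,
      (min s1 t - s1 * t) * (min s2 t - s2 * t) *
        (max (min s1 s2 - t) 0 + s1 * s2 * (1 - t) - s1 * max (s2 - t) 0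
          - s2 * max (s1 - t) 0))
    = t^2*(1-t)^3/3 * s1^2 := by
  have hc : Continuous fun s2 : ℝ => (min s1 t - s1 * t) * (min s2 t - s2 * t) *
        (max (min s1 s2 - t) 0 + s1 * s2 * (1 - t) - s1 * max (s2 - t) 0
          - s2 * max (s1 - t) 0) := by fun_prop
  rw [← intervalIntegral.integral_add_adjacent_intervals
      (hc.intervalIntegrable 0 t) (hc.intervalIntegrable t 1)]
  have e1 : Set.EqOn (fun s2 : ℝ => (min s1 t - s1 * t) * (min s2 t - s2 * t) *
        (max (min s1 s2 - t) 0 + s1 * s2 * (1 - t) - s1 * max (s2 - t) 0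
          - s2 * max (s1 - t) 0))
      (fun s2 : ℝ => 0 + 0*s2 + (s1^2*(1-t)^3)*s2^2 + 0*s2^3 + 0*s2^4) (Set.uIcc 0 t) := by
    intro s2 hs2
    rw [Set.uIcc_of_le ht0] at hs2
    have m1 : min s2 t = s2 := min_eq_left hs2.2
    have m2 : min s1 t = s1 := min_eq_left h1
    have m3 : max (s2 - t) 0 = 0 := max_eq_right (by linarith [hs2.2])
    have m4 : max (s1 - t) 0 = 0 := max_eq_right (by linarith)
    have m5 : max (min s1 s2 - t) 0 = 0 :=
      max_eq_right (sub_nonpos.mpr (le_trans (min_le_left _ _) h1))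
    simp only [m1, m2, m3, m4, m5]
    ring
  have e2 : Set.EqOn (fun s2 : ℝ => (min s1 t - s1 * t) * (min s2 t - s2 * t) *
        (max (min s1 s2 - t) 0 + s1 * s2 * (1 - t) - s1 * max (s2 - t) 0
          - s2 * max (s1 - t) 0))
      (fun s2 : ℝ => (s1^2*t^2*(1-t)) + (-(2*s1^2*t^2*(1-t)))*s2 + (s1^2*t^2*(1-t))*s2^2
        + 0*s2^3 + 0*s2^4) (Set.uIcc t 1) := by
    intro s2 hs2
    rw [Set.uIcc_of_le ht1] at hs2
    have m1 : min s2 t = t := min_eq_right hs2.1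
    have m2 : min s1 t = s1 := min_eq_left h1
    have m3 : max (s2 - t) 0 = s2 - t := max_eq_left (by linarith [hs2.1])
    have m4 : max (s1 - t) 0 = 0 := max_eq_right (by linarith)
    have m5 : max (min s1 s2 - t) 0 = 0 :=
      max_eq_right (sub_nonpos.mpr (le_trans (min_le_left _ _) h1))
    simp only [m1, m2, m3, m4, m5]
    ring
  rw [intervalIntegral.integral_congr e1, intervalIntegral.integral_congr e2,
    poly_int, poly_int]
  ring

private lemma inner_hi (t s1 : ℝ) (ht0 : 0 ≤ t) (ht1 : t ≤ 1) (h0 : t ≤ s1) (h1 : s1 ≤ 1) :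
    (∫ s2 in (0:ℝ)..1,
      (min s1 t - s1 * t) * (min s2 t - s2 * t) *
        (max (min s1 s2 - t) 0 + s1 * s2 * (1 - t) - s1 * max (s2 - t) 0
          - s2 * max (s1 - t) 0))
    = (-(t^3)/3 + t^4/2 - t^5/3) + (t^2/3 + 2*t^3/3 - t^4 + 2*t^5/3)*s1
      + (-(5*t^2)/6 - t^3/3 + t^4/2 - t^5/3)*s1^2 + (2*t^2/3)*s1^3 + (-(t^2)/6)*s1^4 := by
  have hc : Continuous fun s2 : ℝ => (min s1 t - s1 * t) * (min s2 t - s2 * t) *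
        (max (min s1 s2 - t) 0 + s1 * s2 * (1 - t) - s1 * max (s2 - t) 0
          - s2 * max (s1 - t) 0) := by fun_prop
  rw [← intervalIntegral.integral_add_adjacent_intervals
      (hc.intervalIntegrable 0 t) (hc.intervalIntegrable t 1),
    ← intervalIntegral.integral_add_adjacent_intervals
      (hc.intervalIntegrable t s1) (hc.intervalIntegrable s1 1)]
  have eA : Set.EqOn (fun s2 : ℝ => (min s1 t - s1 * t) * (min s2 t - s2 * t) *
        (max (min s1 s2 - t) 0 + s1 * s2 * (1 - t) - s1 * max (s2 - t) 0
          - s2 * max (s1 - t) 0))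
      (fun s2 : ℝ => 0 + 0*s2 + (t^2*(1-t)*(1-s1)^2)*s2^2 + 0*s2^3 + 0*s2^4)
      (Set.uIcc 0 t) := by
    intro s2 hs2
    rw [Set.uIcc_of_le ht0] at hs2
    have m1 : min s2 t = s2 := min_eq_left hs2.2
    have m2 : min s1 t = t := min_eq_right h0
    have m3 : max (s2 - t) 0 = 0 := max_eq_right (by linarith [hs2.2])
    have m4 : max (s1 - t) 0 = s1 - t := max_eq_left (by linarith)
    have m5 : max (min s1 s2 - t) 0 = 0 :=
      max_eq_right (sub_nonpos.mpr (le_trans (min_le_right _ _) hs2.2))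
    simp only [m1, m2, m3, m4, m5]
    ring
  have eB : Set.EqOn (fun s2 : ℝ => (min s1 t - s1 * t) * (min s2 t - s2 * t) *
        (max (min s1 s2 - t) 0 + s1 * s2 * (1 - t) - s1 * max (s2 - t) 0
          - s2 * max (s1 - t) 0))
      (fun s2 : ℝ => (-(t^3*(1-s1)^2)) + ((1+2*t)*t^2*(1-s1)^2)*s2
        + (-((1+t)*t^2*(1-s1)^2))*s2^2 + 0*s2^3 + 0*s2^4)
      (Set.uIcc t s1) := by
    intro s2 hs2
    rw [Set.uIcc_of_le h0] at hs2
    have m1 : min s2 t = t := min_eq_right hs2.1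
    have m2 : min s1 t = t := min_eq_right h0
    have m3 : max (s2 - t) 0 = s2 - t := max_eq_left (by linarith [hs2.1])
    have m4 : max (s1 - t) 0 = s1 - t := max_eq_left (by linarith)
    have m5 : max (min s1 s2 - t) 0 = s2 - t := by
      rw [min_eq_right hs2.2]
      exact max_eq_left (by linarith [hs2.1])
    simp only [m1, m2, m3, m4, m5]
    ring
  have eC : Set.EqOn (fun s2 : ℝ => (min s1 t - s1 * t) * (min s2 t - s2 * t) *
        (max (min s1 s2 - t) 0 + s1 * s2 * (1 - t) - s1 * max (s2 - t) 0
          - s2 * max (s1 - t) 0))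
      (fun s2 : ℝ => (t^2*(1-s1)*(s1*(1+t)-t)) + (-(2*t^2*(1-s1)*(s1*(1+t)-t)))*s2
        + (t^2*(1-s1)*(s1*(1+t)-t))*s2^2 + 0*s2^3 + 0*s2^4)
      (Set.uIcc s1 1) := by
    intro s2 hs2
    rw [Set.uIcc_of_le h1] at hs2
    have m1 : min s2 t = t := min_eq_right (le_trans h0 hs2.1)
    have m2 : min s1 t = t := min_eq_right h0
    have m3 : max (s2 - t) 0 = s2 - t := max_eq_left (by linarith [hs2.1])
    have m4 : max (s1 - t) 0 = s1 - t := max_eq_left (by linarith)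
    have m5 : max (min s1 s2 - t) 0 = s1 - t := by
      rw [min_eq_left hs2.1]
      exact max_eq_left (by linarith)
    simp only [m1, m2, m3, m4, m5]
    ring
  rw [intervalIntegral.integral_congr eA, intervalIntegral.integral_congr eB,
    intervalIntegral.integral_congr eC, poly_int, poly_int, poly_int]
  ring

/-- For every `t ∈ [0,1]`,
`∫₀¹∫₀¹ (min(s1,t) - s1 t)(min(s2,t) - s2 t)[(min(s1,s2) - t)₊ + s1 s2 (1-t)
  - s1 (s2-t)₊ - s2 (s1-t)₊] ds1 ds2 = t²(1-t)²(1 - 3t + 8t² - 6t³)/45`. -/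
theorem double_integral_postchange_kernel (t : ℝ) (ht : t ∈ Set.Icc (0:ℝ) 1) :
    (∫ s1 in (0:ℝ)..1, ∫ s2 in (0:ℝ)..1,
      (min s1 t - s1 * t) * (min s2 t - s2 * t) *
        (max (min s1 s2 - t) 0 + s1 * s2 * (1 - t) - s1 * max (s2 - t) 0
          - s2 * max (s1 - t) 0))
      = t ^ 2 * (1 - t) ^ 2 * (1 - 3 * t + 8 * t ^ 2 - 6 * t ^ 3) / 45 := by
  obtain ⟨ht0, ht1⟩ := ht
  have Glo : Set.EqOn (fun s1 : ℝ => ∫ s2 in (0:ℝ)..1,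
      (min s1 t - s1 * t) * (min s2 t - s2 * t) *
        (max (min s1 s2 - t) 0 + s1 * s2 * (1 - t) - s1 * max (s2 - t) 0
          - s2 * max (s1 - t) 0))
      (fun s1 : ℝ => 0 + 0*s1 + (t^2*(1-t)^3/3)*s1^2 + 0*s1^3 + 0*s1^4)
      (Set.uIcc 0 t) := by
    intro s1 hs1
    rw [Set.uIcc_of_le ht0] at hs1
    simp only
    rw [inner_lo t s1 ht0 ht1 hs1.1 hs1.2]
    ring
  have Ghi : Set.EqOn (fun s1 : ℝ => ∫ s2 in (0:ℝ)..1,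
      (min s1 t - s1 * t) * (min s2 t - s2 * t) *
        (max (min s1 s2 - t) 0 + s1 * s2 * (1 - t) - s1 * max (s2 - t) 0
          - s2 * max (s1 - t) 0))
      (fun s1 : ℝ => (-(t^3)/3 + t^4/2 - t^5/3) + (t^2/3 + 2*t^3/3 - t^4 + 2*t^5/3)*s1
        + (-(5*t^2)/6 - t^3/3 + t^4/2 - t^5/3)*s1^2 + (2*t^2/3)*s1^3 + (-(t^2)/6)*s1^4)
      (Set.uIcc t 1) := by
    intro s1 hs1
    rw [Set.uIcc_of_le ht1] at hs1
    simp only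
    rw [inner_hi t s1 ht0 ht1 hs1.1 hs1.2]
  have iglo : IntervalIntegrable (fun s1 : ℝ => ∫ s2 in (0:ℝ)..1,
      (min s1 t - s1 * t) * (min s2 t - s2 * t) *
        (max (min s1 s2 - t) 0 + s1 * s2 * (1 - t) - s1 * max (s2 - t) 0
          - s2 * max (s1 - t) 0)) MeasureTheory.volume 0 t :=
    ContinuousOn.intervalIntegrable
      (((by fun_prop : Continuous fun s1 : ℝ => 0 + 0*s1 + (t^2*(1-t)^3/3)*s1^2
        + 0*s1^3 + 0*s1^4).continuousOn).congr Glo)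
  have ighi : IntervalIntegrable (fun s1 : ℝ => ∫ s2 in (0:ℝ)..1,
      (min s1 t - s1 * t) * (min s2 t - s2 * t) *
        (max (min s1 s2 - t) 0 + s1 * s2 * (1 - t) - s1 * max (s2 - t) 0
          - s2 * max (s1 - t) 0)) MeasureTheory.volume t 1 :=
    ContinuousOn.intervalIntegrable
      (((by fun_prop : Continuous fun s1 : ℝ => (-(t^3)/3 + t^4/2 - t^5/3)
        + (t^2/3 + 2*t^3/3 - t^4 + 2*t^5/3)*s1
        + (-(5*t^2)/6 - t^3/3 + t^4/2 - t^5/3)*s1^2 + (2*t^2/3)*s1^3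
        + (-(t^2)/6)*s1^4).continuousOn).congr Ghi)
  rw [← intervalIntegral.integral_add_adjacent_intervals iglo ighi,
    intervalIntegral.integral_congr Glo, intervalIntegral.integral_congr Ghi,
    poly_int, poly_int]
  ring
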